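/- Define k₂(v,u) = (2 s^{3/2}/(g u₀ v₀)) U₁ e^{-U₂}, where U₂ = √s |u-v|/(2g), U₁ = (1 + ((u₀+v₀)/2) U₂^{-1} + ((u₀+v₀)/2) U₂^{-2}) U₂^{-1}, and u₀ = √(1+|u|²), v₀ = √(1+|v|²), s = 2(u₀v₀ - u·v + 1), g = √(s-4). Then there exists C > 0 such that k₂(v,u) ≤ C (max{u₀,v₀} |u-v|)^{-1} e^{-|u-v|/4} for all u ≠ v. -/

import Mathlib

open MeasureTheory Real
open scoped RealInnerProductSpace

noncomputable def energy (v : EuclideanSpace ℝ (Fin 3)) : ℝ := Real.sqrt (1 + ‖v‖ ^ 2)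

noncomputable def sVar (u v : EuclideanSpace ℝ (Fin 3)) : ℝ :=
  2 * (energy u * energy v - ⟪u, v⟫ + 1)

noncomputable def relMom (u v : EuclideanSpace ℝ (Fin 3)) : ℝ :=
  Real.sqrt (sVar u v - 4)

noncomputable def U2 (v u : EuclideanSpace ℝ (Fin 3)) : ℝ :=
  Real.sqrt (sVar u v) * ‖u - v‖ / (2 * relMom u v)

noncomputable def U1 (v u : EuclideanSpace ℝ (Fin 3)) : ℝ :=
  (1 + (energy u + energy v) / 2 * (U2 v u)⁻¹ + (energy u + energy v) / 2 * (U2 v u)⁻¹ ^ 2) *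
    (U2 v u)⁻¹

/-- The gain-term kernel `k₂` of the compact part of the linearized collision operator. -/
noncomputable def k2 (v u : EuclideanSpace ℝ (Fin 3)) : ℝ :=
  2 * (sVar u v) ^ ((3 : ℝ) / 2) / (relMom u v * energy u * energy v) * U1 v u *
    Real.exp (-U2 v u)

set_option maxHeartbeats 1000000 in
/-- Pointwise upper bound on the kernel `k₂`. -/
theorem k2_bound :
    ∃ C > 0, ∀ u v : EuclideanSpace ℝ (Fin 3), u ≠ v →
      k2 v u ≤ C / (max (energy u) (energy v) * ‖u - v‖) * Real.exp (-‖u - v‖ / 4) := by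
  refine ⟨1792, by norm_num, fun u v huv => ?_⟩
  set a := ‖u‖ with ha
  set b := ‖v‖ with hb
  set A := energy u with hA
  set B := energy v with hB
  have ha0 : 0 ≤ a := norm_nonneg u
  have hb0 : 0 ≤ b := norm_nonneg v
  have hA2 : A ^ 2 = 1 + a ^ 2 := Real.sq_sqrt (by positivity)
  have hB2 : B ^ 2 = 1 + b ^ 2 := Real.sq_sqrt (by positivity)
  have hA0 : 0 ≤ A := Real.sqrt_nonneg _
  have hB0 : 0 ≤ B := Real.sqrt_nonneg _
  have hA1 : 1 ≤ A := by nlinarith only [hA2, hA0, sq_nonneg a]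
  have hB1 : 1 ≤ B := by nlinarith only [hB2, hB0, sq_nonneg b]
  have haA : a < A := by nlinarith only [hA2, hA0, ha0]
  have hbB : b < B := by nlinarith only [hB2, hB0, hb0]
  set r := ‖u - v‖ with hrdef
  have hr : 0 < r := by rw [hrdef, norm_pos_iff, sub_ne_zero]; exact huv
  have hip : r ^ 2 = a ^ 2 - 2 * ⟪u, v⟫ + b ^ 2 := norm_sub_sq_real u v
  have habr : |a - b| ≤ r := abs_norm_sub_norm_le u v
  have habr2 : (a - b) ^ 2 ≤ r ^ 2 := by
    rw [← sq_abs (a - b)]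
    exact pow_le_pow_left₀ (abs_nonneg _) habr 2
  have hABab : (A - B) ^ 2 * (A + B) ^ 2 = (a - b) ^ 2 * (a + b) ^ 2 := by
    have h : A ^ 2 - B ^ 2 = a ^ 2 - b ^ 2 := by linarith only [hA2, hB2]
    have h2 : (A ^ 2 - B ^ 2) ^ 2 = (a ^ 2 - b ^ 2) ^ 2 := by rw [h]
    linear_combination h2
  have hstrict : (A - B) ^ 2 < r ^ 2 := by
    rcases eq_or_ne a b with hab | hab
    · have hAB : A = B := by rw [hA, hB, energy, energy, ← ha, ← hb, hab]
      rw [hAB]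
      simpa using pow_pos hr 2
    · have hab2 : 0 < (a - b) ^ 2 := by
        have : a - b ≠ 0 := sub_ne_zero.mpr hab
        positivity
      have hsum : a + b < A + B := by linarith only [haA, hbB]
      have h1 : (a - b) ^ 2 * (a + b) ^ 2 < (a - b) ^ 2 * (A + B) ^ 2 := by
        apply mul_lt_mul_of_pos_left _ hab2
        nlinarith only [hsum, ha0, hb0]
      have h2 : (a - b) ^ 2 * (A + B) ^ 2 ≤ r ^ 2 * (A + B) ^ 2 :=
        mul_le_mul_of_nonneg_right habr2 (sq_nonneg _)
      have hAB2 : 0 < (A + B) ^ 2 := pow_pos (by linarith only [hA1, hB1]) 2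
      have h4 : (A - B) ^ 2 * (A + B) ^ 2 < r ^ 2 * (A + B) ^ 2 := by
        linarith only [hABab, h1, h2]
      exact lt_of_mul_lt_mul_right h4 hAB2.le
  set s := sVar u v with hs
  have hs4' : s - 4 = r ^ 2 - (A - B) ^ 2 := by
    rw [hs, sVar, ← hA, ← hB]
    linear_combination hA2 + hB2 - hip
  have hs4 : 4 < s := by linarith only [hs4', hstrict]
  have hs0 : 0 < s := by linarith only [hs4]
  set g := relMom u v with hg
  have hg2 : g ^ 2 = s - 4 := by
    rw [hg, relMom, ← hs]
    exact Real.sq_sqrt (by linarith only [hs4])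
  have hg0 : 0 < g := by
    rw [hg, relMom, ← hs]
    exact Real.sqrt_pos.mpr (by linarith only [hs4])
  set t := Real.sqrt s with ht
  have ht2 : t ^ 2 = s := Real.sq_sqrt (le_of_lt hs0)
  have htnn : 0 ≤ t := Real.sqrt_nonneg s
  have ht0 : 2 ≤ t := by nlinarith only [ht2, htnn, hs4]
  have htg : g < t := by nlinarith only [hg2, ht2, hg0.le, htnn]
  have hgr : g ≤ r := by
    nlinarith only [hg2, hs4', sq_nonneg (A - B), hg0.le, hr.le]
  set U := U2 v u with hU
  have hUval : U = t * r / (2 * g) := by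
    rw [hU, U2, ← hs, ← hg, ← ht, ← hrdef]
  have hU0 : 0 < U := by rw [hUval]; positivity
  have hUr : r / 2 ≤ U := by
    rw [hUval, div_le_div_iff₀ (by norm_num) (by positivity)]
    nlinarith only [htg, hr, hg0]
  have hUt : t / 2 ≤ U := by
    rw [hUval, div_le_div_iff₀ (by norm_num) (by positivity)]
    nlinarith only [hgr, htnn, ht0]
  have hU1 : 1 ≤ U := by linarith only [hUt, ht0]
  set w := (A + B) / 2 with hw
  set M := max A B with hM
  set m := min A B with hm
  have hMm : M * m = A * B := max_mul_min A B
  have hm1 : 1 ≤ m := le_min hA1 hB1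
  have hM1 : 1 ≤ M := le_max_of_le_left hA1
  have hM0 : 0 < M := by linarith only [hM1]
  have hm0 : 0 < m := by linarith only [hm1]
  have hwM : w ≤ M := by
    have h1 := le_max_left A B
    have h2 := le_max_right A B
    rw [← hM] at h1 h2
    rw [hw]
    linarith only [h1, h2]
  have hMmr : M - m ≤ r := by
    have habs : M - m = |B - A| := max_sub_min_eq_abs A B
    have hsq : |B - A| ^ 2 < r ^ 2 := by
      rw [sq_abs]
      nlinarith only [hstrict]
    rw [habs]
    nlinarith only [hsq, abs_nonneg (B - A), hr.le]
  have hw_bound : w ≤ m * (1 + 2 * U) := by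
    nlinarith only [hwM, hMmr, hUr, hm1, hU0.le,
      mul_nonneg (by linarith only [hm1] : (0:ℝ) ≤ m - 1) hU0.le]
  have hs32 : s ^ ((3 : ℝ) / 2) = s * t := by
    rw [ht, Real.sqrt_eq_rpow, show (3 : ℝ) / 2 = 1 + 1 / 2 by norm_num,
      Real.rpow_add hs0, Real.rpow_one]
  have htval : t = 2 * U * g / r := by
    rw [hUval]; field_simp
  have hk2 : k2 v u = 4 * s / (r * A * B) * (1 + w / U + w / U ^ 2) * Real.exp (-U) := by
    simp only [k2, U1]
    rw [← hs, ← hg, ← hU, ← hA, ← hB, hs32, htval, ← hw]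
    have hAne : A ≠ 0 := by positivity
    have hBne : B ≠ 0 := by positivity
    have hUne : U ≠ 0 := ne_of_gt hU0
    have hgne : g ≠ 0 := ne_of_gt hg0
    have hrne : r ≠ 0 := ne_of_gt hr
    field_simp
    ring
  have hexp : Real.exp (-U) ≤ Real.exp (-(t / 4)) * Real.exp (-(r / 4)) := by
    rw [← Real.exp_add]
    exact Real.exp_le_exp.mpr (by linarith only [hUr, hUt])
  have hsexp : s * Real.exp (-(t / 4)) ≤ 64 := by
    have h1 : t / 8 + 1 ≤ Real.exp (t / 8) := Real.add_one_le_exp _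
    have h2 : Real.exp (t / 4) = Real.exp (t / 8) * Real.exp (t / 8) := by
      rw [← Real.exp_add]; congr 1; ring
    have h3 : s ≤ 64 * Real.exp (t / 4) := by
      nlinarith only [h1, h2, ht2, htnn, (Real.exp_pos (t / 8)).le]
    have h5 : Real.exp (-(t / 4)) * Real.exp (t / 4) = 1 := by
      rw [← Real.exp_add]; simp
    nlinarith only [h3, h5, (Real.exp_pos (-(t / 4))).le]
  have hpoly : 1 + w / U + w / U ^ 2 ≤ 7 * m := by
    have hwU : w / U ≤ 3 * m := by
      rw [div_le_iff₀ hU0]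
      nlinarith only [hw_bound, mul_nonneg hm0.le (sub_nonneg.mpr hU1)]
    have hwU2 : w / U ^ 2 ≤ 3 * m := by
      rw [div_le_iff₀ (pow_pos hU0 2)]
      nlinarith only [hw_bound,
        mul_nonneg (mul_nonneg hm0.le (by linarith only [hU0] : (0:ℝ) ≤ 3 * U + 1))
          (sub_nonneg.mpr hU1)]
    linarith only [hwU, hwU2, hm1]
  have hw0 : 0 < w := by rw [hw]; linarith only [hA1, hB1]
  have hX0 : 0 ≤ 4 * s / (r * A * B) := by positivity
  rw [show -r / 4 = -(r / 4) by ring]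
  calc k2 v u = 4 * s / (r * A * B) * (1 + w / U + w / U ^ 2) * Real.exp (-U) := hk2
    _ ≤ 4 * s / (r * A * B) * (7 * m) * (Real.exp (-(t / 4)) * Real.exp (-(r / 4))) := by
        refine mul_le_mul (mul_le_mul_of_nonneg_left hpoly hX0) hexp (Real.exp_pos _).le ?_
        have h7m : (0:ℝ) ≤ 7 * m := by linarith only [hm1]
        exact mul_nonneg hX0 h7m
    _ = 28 * (m / (A * B)) * (s * Real.exp (-(t / 4))) / r * Real.exp (-(r / 4)) := by
        ring
    _ ≤ 28 * (m / (A * B)) * 64 / r * Real.exp (-(r / 4)) := by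
        have hd : 0 ≤ 28 * (m / (A * B)) := by positivity
        have hmul := mul_le_mul_of_nonneg_left hsexp hd
        have hpos : 0 ≤ 1 / r * Real.exp (-(r / 4)) := by positivity
        calc 28 * (m / (A * B)) * (s * Real.exp (-(t / 4))) / r * Real.exp (-(r / 4))
            = 28 * (m / (A * B)) * (s * Real.exp (-(t / 4))) * (1 / r * Real.exp (-(r / 4))) := by
              ring
          _ ≤ 28 * (m / (A * B)) * 64 * (1 / r * Real.exp (-(r / 4))) :=
              mul_le_mul_of_nonneg_right hmul hpos
          _ = 28 * (m / (A * B)) * 64 / r * Real.exp (-(r / 4)) := by ring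
    _ = 1792 / (M * r) * Real.exp (-(r / 4)) := by
        rw [← hMm]
        have hMne : M ≠ 0 := ne_of_gt hM0
        have hmne : m ≠ 0 := ne_of_gt hm0
        have hrne : r ≠ 0 := ne_of_gt hr
        field_simp
        ring
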